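/- If the linear term dS = ⟨g(w), dg(w, dw)⟩ of the Taylor expansion of S at w in the direction dw is strictly negative, then the norm of the backpropagated gradient decreases after the weight correction: there exists ε > 0 such that for all t with 0 < t < ε, ‖g(w + t·dw)‖ < ‖g(w)‖. (Decrease direction of Theorem 1 of the paper.) -/

import Mathlib

open Matrix

attribute [local instance] Matrix.linftyOpNormedAddCommGroup Matrix.linftyOpNormedRing
  Matrix.linftyOpNormedAlgebra

lemma prodDeriv {n : Type*} [Fintype n] [DecidableEq n] (h : ℕ)
    (A B : Fin h → Matrix n n ℝ) :
    HasDerivAt (fun t : ℝ => (List.ofFn fun i => A i + t • B i).prod)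
      (∑ i : Fin h, (List.ofFn fun j => if j = i then B j else A j).prod) 0 := by
  induction h with
  | zero =>
    simp only [List.ofFn_zero, List.prod_nil, Finset.univ_eq_empty, Finset.sum_empty]
    exact hasDerivAt_const (0:ℝ) (1 : Matrix n n ℝ)
  | succ m ih =>
    have h1 : HasDerivAt (fun t : ℝ => A 0 + t • B 0) (B 0) 0 := by
      exact (((hasDerivAt_id (0:ℝ)).smul_const (B 0)).const_add (A 0)).congr_deriv (one_smul ℝ (B 0))
    have h2 := ih (fun i => A i.succ) (fun i => B i.succ)
    have h3 := h1.mul h2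
    simp only [zero_smul, add_zero] at h3
    have : (fun t : ℝ => (List.ofFn fun i : Fin (m+1) => A i + t • B i).prod)
        = fun t : ℝ => (A 0 + t • B 0) * (List.ofFn fun i : Fin m => A i.succ + t • B i.succ).prod := by
      funext t; rw [List.ofFn_succ, List.prod_cons]
    rw [this]
    refine h3.congr_deriv (Eq.symm ?_)
    rw [Fin.sum_univ_succ]
    congr 1
    · simp [List.ofFn_succ, Fin.succ_ne_zero]
    · rw [Finset.mul_sum]
      refine Finset.sum_congr rfl fun i _ => ?_
      rw [List.ofFn_succ, List.prod_cons]
      simp [Fin.succ_ne_zero, Fin.succ_inj]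
      exact fun h => absurd h.symm (Fin.succ_ne_zero i)


/-- The embedding of `n → ℝ` into `EuclideanSpace ℝ n`, so that `‖euc x‖` is the
Euclidean norm of `x`. -/
noncomputable def euc {n : Type*} [Fintype n] (x : n → ℝ) : EuclideanSpace ℝ n :=
  (EuclideanSpace.equiv n ℝ).symm x

/-- The backpropagated gradient vector `g(w) = D₁·w·D₂·w ⋯ D_h·w·δ`. -/
noncomputable def gVec {n : Type*} [Fintype n] [DecidableEq n] {h : ℕ}
    (D : Fin h → Matrix n n ℝ) (δ : n → ℝ) (w : Matrix n n ℝ) : n → ℝ :=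
  (List.ofFn fun i : Fin h => D i * w).prod *ᵥ δ

/-- The vector `dg(w, dw) = Σ_{i=1}^{h} D₁·w ⋯ Dᵢ·dw ⋯ D_h·w·δ`, obtained from
`g(w)` by replacing the `i`-th occurrence of `w` by `dw` and summing over `i`. -/
noncomputable def dgVec {n : Type*} [Fintype n] [DecidableEq n] {h : ℕ}
    (D : Fin h → Matrix n n ℝ) (δ : n → ℝ) (w dw : Matrix n n ℝ) : n → ℝ :=
  ∑ i : Fin h,
    (List.ofFn fun j : Fin h => if j = i then D j * dw else D j * w).prod *ᵥ δ

lemma gDeriv {n : Type*} [Fintype n] [DecidableEq n] {h : ℕ}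
    (D : Fin h → Matrix n n ℝ) (δ : n → ℝ) (w dw : Matrix n n ℝ) :
    HasDerivAt (fun t : ℝ => euc (gVec D δ (w + t • dw)))
      (euc (dgVec D δ w dw)) 0 := by
  have hP := prodDeriv h (fun i => D i * w) (fun i => D i * dw)
  have hP' : HasDerivAt (fun t : ℝ => (List.ofFn fun i => D i * (w + t • dw)).prod)
      (∑ i : Fin h, (List.ofFn fun j => if j = i then D j * dw else D j * w).prod) 0 := by
    convert hP using 2 with t
    simp [mul_add, Matrix.mul_smul]
  let L : Matrix n n ℝ →L[ℝ] (n → ℝ) :=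
    LinearMap.toContinuousLinearMap
      { toFun := fun M => M *ᵥ δ
        map_add' := fun M N => Matrix.add_mulVec M N δ
        map_smul' := fun c M => smul_mulVec c M δ }
  have hL := L.hasFDerivAt.comp_hasDerivAt 0 hP'
  have hG : HasDerivAt (fun t : ℝ => gVec D δ (w + t • dw)) (dgVec D δ w dw) 0 := by
    refine hL.congr_deriv (Eq.symm ?_)
    simp only [dgVec, L, map_sum]
    exact (map_sum L _ _).symm
  exact (((EuclideanSpace.equiv n ℝ).symm :
    (n → ℝ) →L[ℝ] EuclideanSpace ℝ n).hasFDerivAt.comp_hasDerivAt 0 hG)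

/-- **Theorem 1 (decrease direction).** If the linear term
`dS = ⟨g(w), dg(w, dw)⟩` of the Taylor expansion of `S` at `w` in the direction `dw`
is strictly negative, then the norm of the backpropagated gradient decreases after
the weight correction: there exists `ε > 0` such that for all `0 < t < ε`,
`‖g(w + t·dw)‖ < ‖g(w)‖`. -/
theorem norm_decreases_of_dS_neg
    {n : Type*} [Fintype n] [DecidableEq n] (h : ℕ) (hh : 1 ≤ h)
    (D : Fin h → Matrix n n ℝ) (hD : ∀ i, (D i).IsDiag) (δ : n → ℝ)
    (w dw : Matrix n n ℝ)
    (hneg : (0 : ℝ) > inner ℝ (euc (gVec D δ w)) (euc (dgVec D δ w dw))) :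
    ∃ ε > (0 : ℝ), ∀ t : ℝ, 0 < t → t < ε →
      ‖euc (gVec D δ (w + t • dw))‖ < ‖euc (gVec D δ w)‖ := by
  set G : ℝ → EuclideanSpace ℝ n := fun t => euc (gVec D δ (w + t • dw)) with hGdef
  have hG : HasDerivAt G (euc (dgVec D δ w dw)) 0 := gDeriv D δ w dw
  set φ : ℝ → ℝ := fun t => inner ℝ (G t) (G t) with hφdef
  have hG0 : G 0 = euc (gVec D δ w) := by simp [hGdef]
  have hφ : HasDerivAt φ
      (inner ℝ (G 0) (euc (dgVec D δ w dw)) + inner ℝ (euc (dgVec D δ w dw)) (G 0)) 0 :=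
    hG.inner ℝ hG
  have hc : (inner ℝ (G 0) (euc (dgVec D δ w dw)) + inner ℝ (euc (dgVec D δ w dw)) (G 0) : ℝ) < 0 := by
    rw [hG0]
    have hcomm := real_inner_comm (euc (gVec D δ w)) (euc (dgVec D δ w dw))
    linarith
  have hslope := hasDerivAt_iff_tendsto_slope.mp hφ
  have hev : ∀ᶠ t in nhdsWithin (0:ℝ) {x | x ≠ 0}, slope φ 0 t < 0 :=
    hslope.eventually_lt_const hc
  obtain ⟨ε, hε, hsub⟩ := Metric.mem_nhdsWithin_iff.mp hev
  refine ⟨ε, hε, fun t ht htε => ?_⟩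
  have hmem : t ∈ {x : ℝ | x ≠ 0} := ne_of_gt ht
  have hdist : t ∈ Metric.ball (0:ℝ) ε := by
    simp [Real.dist_eq, abs_of_pos ht, htε]
  have hs : slope φ 0 t < 0 := hsub ⟨hdist, hmem⟩
  rw [slope_def_field] at hs
  have hφlt : φ t < φ 0 := by
    have : (φ t - φ 0) / t < 0 := by simpa using hs
    have ht' : φ t - φ 0 < 0 := by
      rcases div_neg_iff.mp this with ⟨h1, h2⟩ | ⟨h1, h2⟩
      · linarith
      · exact h1
    linarith
  have hsq : ‖G t‖ ^ 2 < ‖G 0‖ ^ 2 := by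
    rw [← real_inner_self_eq_norm_sq, ← real_inner_self_eq_norm_sq]
    exact hφlt
  rw [← hG0]
  by_contra hle
  push_neg at hle
  exact absurd (pow_le_pow_left₀ (norm_nonneg _) hle 2) (not_le.mpr hsq)
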